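/- arXiv:2307.07107 — 2 statements merged into one kernel-verified Lean document; each statement's English description precedes it below -/
import Mathlib

section
/- Let G be a finite simple graph and (i,j) an edge of G. Then γ_max is unchanged by adding a virtual node: γ_max_{G^{+VN}}(i,j) = γ_max_G(i,j). -/
open Finset

attribute [local instance] Classical.propDecidable

variable {V : Type*} [Fintype V] [DecidableEq V]

/-- The virtual-node graph `G^{+VN}`: vertex set `V ∪ {v*}` (here `Option V`, with `none`
playing the role of the virtual node `v*`), original adjacency on `V`, and the virtual
node adjacent to every original vertex. -/
def addVN (G : SimpleGraph V) : SimpleGraph (Option V) where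
  Adj u v :=
    match u, v with
    | some a, some b => G.Adj a b
    | some _, none => True
    | none, some _ => True
    | none, none => False
  symm := by
    constructor
    intro u v h
    cases u <;> cases v <;> simp_all
    exact h.symm
  loopless := by
    constructor
    intro u h
    cases u <;> simp_all

/-- `#Δ(i,j)`: number of triangles containing the edge `(i,j)`, i.e. common neighbors. -/
noncomputable def triCount (G : SimpleGraph V) (i j : V) : ℕ :=
  (G.neighborFinset i ∩ G.neighborFinset j).card

/-- `#□^i(i,j)`: number of diagonal-free 4-cycles based at the edge `(i,j)`, seen from `i`. -/
noncomputable def sqCount (G : SimpleGraph V) (i j : V) : ℕ :=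
  ((G.neighborFinset i).filter (fun k => k ≠ j ∧ ¬ G.Adj k j ∧
    ∃ w, G.Adj w k ∧ G.Adj w j ∧ w ≠ i ∧ ¬ G.Adj w i)).card

/-- The diagonal-free 4-cycles based at the edge `(i,j)`, as pairs `(k, w)`. -/
noncomputable def fourCycles (G : SimpleGraph V) (i j : V) : Finset (V × V) :=
  Finset.univ.filter (fun p => G.Adj i p.1 ∧ p.1 ≠ j ∧ ¬ G.Adj p.1 j ∧
    G.Adj p.2 p.1 ∧ G.Adj p.2 j ∧ p.2 ≠ i ∧ ¬ G.Adj p.2 i)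

/-- `γ_max(i,j)`: maximum over nodes `k` of the number of diagonal-free 4-cycles based at
`(i,j)` passing through `k`. -/
noncomputable def gammaMax (G : SimpleGraph V) (i j : V) : ℕ :=
  Finset.univ.sup (fun x => ((fourCycles G i j).filter (fun p => p.1 = x ∨ p.2 = x)).card)

/-- The balanced Forman curvature of the edge `(i,j)`. -/
noncomputable def Ric (G : SimpleGraph V) (i j : V) : ℝ :=
  2 / (G.degree i : ℝ) + 2 / (G.degree j : ℝ) - 2
    + (triCount G i j : ℝ) *
        (2 / (max (G.degree i) (G.degree j) : ℝ) + 1 / (min (G.degree i) (G.degree j) : ℝ))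
    + ((gammaMax G i j : ℝ) / (max (G.degree i) (G.degree j) : ℝ)) *
        ((sqCount G i j : ℝ) + (sqCount G j i : ℝ))

/-- The triangle-only balanced Forman curvature `Ric₀` of the edge `(i,j)`. -/
noncomputable def Ric₀ (G : SimpleGraph V) (i j : V) : ℝ :=
  2 / (G.degree i : ℝ) + 2 / (G.degree j : ℝ) - 2
    + (triCount G i j : ℝ) *
        (2 / (max (G.degree i) (G.degree j) : ℝ) + 1 / (min (G.degree i) (G.degree j) : ℝ))

lemma addVN_adj_some_some (G : SimpleGraph V) (a b : V) :
    (addVN G).Adj (some a) (some b) ↔ G.Adj a b := Iff.rfl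

lemma mem_fourCycles_addVN (G : SimpleGraph V) (i j : V) (p : Option V × Option V) :
    p ∈ fourCycles (addVN G) (some i) (some j) ↔
      ∃ q ∈ fourCycles G i j, p = (some q.1, some q.2) := by
  obtain ⟨p1, p2⟩ := p
  simp only [fourCycles, Finset.mem_filter, Finset.mem_univ, true_and]
  constructor
  · rintro ⟨h1, h2, h3, h4, h5, h6, h7⟩
    obtain ⟨k, rfl⟩ : ∃ k, p1 = some k := by
      cases p1 with
      | none => exact absurd trivial h3
      | some k => exact ⟨k, rfl⟩
    obtain ⟨w, rfl⟩ : ∃ w, p2 = some w := by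
      cases p2 with
      | none => exact absurd trivial h7
      | some w => exact ⟨w, rfl⟩
    refine ⟨(k, w), ⟨h1, ?_, h3, h4, h5, ?_, h7⟩, rfl⟩
    · exact fun h => h2 (congrArg some h)
    · exact fun h => h6 (congrArg some h)
  · rintro ⟨⟨k, w⟩, ⟨h1, h2, h3, h4, h5, h6, h7⟩, h⟩
    injection h with ha hb
    subst ha; subst hb
    exact ⟨h1, by simpa using h2, h3, h4, h5, by simpa using h6, h7⟩

lemma card_filter_addVN (G : SimpleGraph V) (i j a : V) :
    ((fourCycles (addVN G) (some i) (some j)).filter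
        (fun p => p.1 = some a ∨ p.2 = some a)).card
      = ((fourCycles G i j).filter (fun p => p.1 = a ∨ p.2 = a)).card := by
  symm
  apply Finset.card_bij (fun q _ => ((some q.1 : Option V), (some q.2 : Option V)))
  · rintro ⟨k, w⟩ hq
    simp only [Finset.mem_filter] at hq ⊢
    refine ⟨(mem_fourCycles_addVN G i j _).2 ⟨(k, w), hq.1, rfl⟩, ?_⟩
    rcases hq.2 with h | h
    · exact Or.inl (by simp [h])
    · exact Or.inr (by simp [h])
  · rintro ⟨k1, w1⟩ _ ⟨k2, w2⟩ _ h
    simp only [Prod.mk.injEq, Option.some.injEq] at h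
    exact Prod.ext h.1 h.2
  · rintro ⟨p1, p2⟩ hp
    simp only [Finset.mem_filter] at hp
    obtain ⟨⟨k, w⟩, hq, heq⟩ := (mem_fourCycles_addVN G i j _).1 hp.1
    injection heq with ha hb
    subst ha; subst hb
    refine ⟨(k, w), Finset.mem_filter.2 ⟨hq, ?_⟩, rfl⟩
    rcases hp.2 with h | h
    · exact Or.inl (by simpa using h)
    · exact Or.inr (by simpa using h)

/-- For an edge `(i,j)` of `G`, the quantity `γ_max` is unchanged by
adding a virtual node. -/
theorem stmt_5 (G : SimpleGraph V) (i j : V) (hij : G.Adj i j) :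
    gammaMax (addVN G) (some i) (some j) = gammaMax G i j := by
  unfold gammaMax
  apply le_antisymm
  · apply Finset.sup_le
    intro x _
    cases x with
    | none =>
      have he : ((fourCycles (addVN G) (some i) (some j)).filter
          (fun p => p.1 = none ∨ p.2 = none)) = ∅ := by
        apply Finset.filter_false_of_mem
        intro p hp
        obtain ⟨q, _, rfl⟩ := (mem_fourCycles_addVN G i j p).1 hp
        simp
      rw [he]
      simp
    | some a =>
      rw [card_filter_addVN G i j a]
      exact Finset.le_sup
        (f := fun x => ((fourCycles G i j).filter (fun p => p.1 = x ∨ p.2 = x)).card)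
        (Finset.mem_univ a)
  · apply Finset.sup_le
    intro a _
    rw [← card_filter_addVN G i j a]
    exact Finset.le_sup
      (f := fun x => ((fourCycles (addVN G) (some i) (some j)).filter
        (fun p => p.1 = x ∨ p.2 = x)).card)
      (Finset.mem_univ (some a))
end

section
/- Let G be a finite simple graph and (i,j) an edge such that the degree of j equals 1. Then i and j have no common neighbor, #□^i(i,j) = #□^j(i,j) = 0, and the balanced Forman curvature satisfies Ric(i,j) = 2/d_i > 0; in particular, pendant edges never have negative curvature. -/
open Finset

attribute [local instance] Classical.propDecidable

variable {V : Type*} [Fintype V] [DecidableEq V]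

/-- For a pendant edge `(i,j)` (i.e. `d_j = 1`): `i` and `j` have no
common neighbor, both diagonal-free 4-cycle counts vanish, and
`Ric(i,j) = 2/d_i > 0`; pendant edges never have negative curvature. -/
theorem stmt_10 (G : SimpleGraph V) (i j : V) (hij : G.Adj i j)
    (hdj : G.degree j = 1) :
    triCount G i j = 0 ∧ sqCount G i j = 0 ∧ sqCount G j i = 0 ∧
    Ric G i j = 2 / (G.degree i : ℝ) ∧ 0 < Ric G i j := by
  have hN : G.neighborFinset j = {i} := by
    have hi : i ∈ G.neighborFinset j := by
      simp [SimpleGraph.mem_neighborFinset, hij.symm]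
    have hc : (G.neighborFinset j).card = 1 := hdj
    obtain ⟨a, ha⟩ := Finset.card_eq_one.mp hc
    rw [ha] at hi ⊢
    simp_all
  have hadj : ∀ w, G.Adj j w → w = i := by
    intro w hw
    have : w ∈ G.neighborFinset j := by simpa [SimpleGraph.mem_neighborFinset] using hw
    simpa [hN] using this
  have htri : triCount G i j = 0 := by
    unfold triCount
    rw [Finset.card_eq_zero]
    ext k
    simp only [Finset.mem_inter, SimpleGraph.mem_neighborFinset, Finset.notMem_empty,
      iff_false, not_and]
    intro hik hjk
    exact (G.loopless.irrefl i) (by rwa [hadj k hjk] at hik)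
  have hsq1 : sqCount G i j = 0 := by
    unfold sqCount
    rw [Finset.card_eq_zero]
    ext k
    simp only [Finset.mem_filter, Finset.notMem_empty, iff_false]
    rintro ⟨_, _, _, w, hwk, hwj, hwi, _⟩
    exact hwi (hadj w hwj.symm)
  have hsq2 : sqCount G j i = 0 := by
    unfold sqCount
    rw [Finset.card_eq_zero]
    ext k
    simp only [Finset.mem_filter, SimpleGraph.mem_neighborFinset, Finset.notMem_empty,
      iff_false]
    rintro ⟨hjk, hki, _⟩
    exact hki (hadj k hjk)
  have hdi : 0 < G.degree i := by
    rw [SimpleGraph.degree_pos_iff_exists_adj]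
    exact ⟨j, hij⟩
  have hric : Ric G i j = 2 / (G.degree i : ℝ) := by
    unfold Ric
    rw [htri, hsq1, hsq2, hdj]
    push_cast
    field_simp
    ring
  refine ⟨htri, hsq1, hsq2, hric, ?_⟩
  rw [hric]
  positivity
end
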